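/- If an ideal X of 2-colorings of complete graphs contains, for every r ≥ 1, an r-wealthy coloring of type 3 (i.e., a coloring (2r,χ) whose bipartite matrix M_K between [r] and [r+1,2r] is similar to the identity matrix I_r), then |X_n| ≥ F_n for all n ≥ 1, where (F_n)_{n≥1} = (1,2,3,5,8,...). -/

import Mathlib

/-- A (directed representation of an) edge: a pair of vertices `p` with `p.1 < p.2`. -/
abbrev Edge (n : ℕ) := {p : Fin n × Fin n // p.1 < p.2}

/-- An edge-`C`-colored complete graph: a number of vertices together with a coloring
of all edges by elements of `C`. -/
abbrev Coloring (C : Type) := (n : ℕ) × (Edge n → C)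

/-- Build an edge from natural numbers `i < j < n`. -/
def mkE {n : ℕ} (i j : ℕ) (hij : i < j) (hj : j < n) : Edge n :=
  ⟨(⟨i, lt_trans hij hj⟩, ⟨j, hj⟩), Fin.mk_lt_mk.mpr hij⟩

/-- The image of an edge under a strictly increasing vertex map. -/
def edgeMap {a b : ℕ} (f : Fin a → Fin b) (hf : StrictMono f) (e : Edge a) : Edge b :=
  ⟨(f e.1.1, f e.1.2), hf e.2⟩

/-- Containment of colorings: `K ⪯ L` via a strictly increasing vertex map that sends
the color of each edge to a `le`-larger color. -/
def ColLe {C : Type} (le : C → C → Prop) (K L : Coloring C) : Prop :=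
  ∃ f : Fin K.1 → Fin L.1, ∃ hf : StrictMono f,
    ∀ e : Edge K.1, le (K.2 e) (L.2 (edgeMap f hf e))

/-- A lower ideal of colorings. -/
def IsIdeal {C : Type} (le : C → C → Prop) (X : Set (Coloring C)) : Prop :=
  ∀ K L : Coloring C, ColLe le K L → L ∈ X → K ∈ X

/-- The `r × r` 0-1 matrix `M_K` of a coloring `K=(2r,χ)`: `M_K(i,j) = χ({i, r+j})`
(with the convention that color `0` is white). -/
def matOf {r : ℕ} (χ : Edge (2 * r) → Fin 2) : Fin r → Fin r → Fin 2 :=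
  fun i j => χ (mkE i.val (r + j.val)
    (by have := i.isLt; omega) (by have := j.isLt; omega))

/-- Swapping the two values 0 and 1. -/
def swap2 : Fin 2 → Fin 2 := fun x => if x = 0 then 1 else 0

/-- The identity 0-1 matrix `I_r`. -/
def idMat (r : ℕ) : Fin r → Fin r → Fin 2 := fun i j => if i = j then 1 else 0

/-- `M` is similar to `I_r`: it equals `I_r` after optionally taking the vertical mirror
image (reversing the order of columns) and/or swapping 0 and 1. -/
def SimilarToId {r : ℕ} (M : Fin r → Fin r → Fin 2) : Prop :=
  ∃ sw mir : Bool, ∀ i j : Fin r,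
    M i j = (if sw then swap2 (idMat r i (if mir then j.rev else j))
             else idMat r i (if mir then j.rev else j))


def Ok {m : ℕ} (s : Fin m → Bool) : Prop :=
  ∀ k l : Fin m, (k : ℕ) + 1 = (l : ℕ) → s k = true → s l = false

instance {m : ℕ} (s : Fin m → Bool) : Decidable (Ok s) := by unfold Ok; infer_instance

lemma ok_tail {m : ℕ} {s : Fin (m+1) → Bool} (hs : Ok s) : Ok (Fin.tail s) := by
  intro k l hkl h
  exact hs k.succ l.succ (by simp [Fin.val_succ]; omega) h

lemma ok_cons_false {m : ℕ} {t : Fin m → Bool} (ht : Ok t) : Ok (Fin.cons false t) := by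
  intro k l hkl h
  rcases Fin.eq_zero_or_eq_succ k with rfl | ⟨k', rfl⟩
  · simp at h
  · rcases Fin.eq_zero_or_eq_succ l with rfl | ⟨l', rfl⟩
    · simp at hkl
    · simp only [Fin.cons_succ] at h ⊢
      exact ht k' l' (by simp [Fin.val_succ] at hkl; omega) h

lemma ok_cons_true {m : ℕ} {t : Fin m → Bool} (ht : Ok t) :
    Ok (Fin.cons true (Fin.cons false t)) := by
  intro k l hkl h
  rcases Fin.eq_zero_or_eq_succ l with rfl | ⟨l', rfl⟩
  · simp at hkl
  · rcases Fin.eq_zero_or_eq_succ k with rfl | ⟨k', rfl⟩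
    · have hl : (l' : ℕ) = 0 := by simp [Fin.val_succ] at hkl; simp [hkl]
      have : l' = 0 := Fin.ext (by simpa using hl)
      subst this; simp
    · simp only [Fin.cons_succ] at h ⊢
      exact ok_cons_false ht k' l' (by simp [Fin.val_succ] at hkl; omega) h

def okEquiv (m : ℕ) :
    {s : Fin (m+2) → Bool // Ok s} ≃ {s : Fin (m+1) → Bool // Ok s} ⊕ {s : Fin m → Bool // Ok s} where
  toFun s :=
    if h : s.1 0 = true then
      Sum.inr ⟨Fin.tail (Fin.tail s.1), ok_tail (ok_tail s.2)⟩
    else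
      Sum.inl ⟨Fin.tail s.1, ok_tail s.2⟩
  invFun t :=
    match t with
    | Sum.inl t => ⟨Fin.cons false t.1, ok_cons_false t.2⟩
    | Sum.inr t => ⟨Fin.cons true (Fin.cons false t.1), ok_cons_true t.2⟩
  left_inv s := by
    by_cases h : s.1 0 = true
    · simp only [h, dite_true]
      apply Subtype.ext
      have h1 : s.1 1 = false := s.2 0 1 rfl h
      funext i
      refine Fin.cases ?_ (fun j => ?_) i
      · simpa using h.symm
      · refine Fin.cases ?_ (fun j' => ?_) j
        · simpa using h1.symm
        · rfl
    · simp only [h, dite_false]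
      apply Subtype.ext
      funext i
      refine Fin.cases ?_ (fun j => ?_) i
      · simpa using (Bool.not_eq_true _).mp h |>.symm
      · rfl
  right_inv t := by
    match t with
    | Sum.inl t => simp [Fin.tail_cons]
    | Sum.inr t => simp [Fin.tail_cons]

lemma card_ok : ∀ m : ℕ, Nat.card {s : Fin m → Bool // Ok s} = Nat.fib (m+2) := by
  have base0 : Nat.card {s : Fin 0 → Bool // Ok s} = 1 := by
    rw [Nat.card_eq_fintype_card]; decide
  have base1 : Nat.card {s : Fin 1 → Bool // Ok s} = 2 := by
    rw [Nat.card_eq_fintype_card]; decide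
  intro m
  induction m using Nat.strong_induction_on with
  | _ m ih =>
    match m with
    | 0 => rw [base0]; decide
    | 1 => rw [base1]; decide
    | (m+2) =>
      rw [Nat.card_congr (okEquiv m), Nat.card_sum, ih (m+1) (by omega), ih m (by omega)]
      conv_rhs => rw [Nat.fib_add_two]
      exact Nat.add_comm _ _

/-- `s` extended to all of `ℕ` by `false`. -/
def sN {m : ℕ} (s : Fin m → Bool) (k : ℕ) : Bool :=
  if h : k < m then s ⟨k, h⟩ else false

lemma okN {m : ℕ} {s : Fin m → Bool} (hs : Ok s) (k : ℕ) :
    sN s k = true → sN s (k+1) = false := by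
  intro h
  unfold sN at h ⊢
  split_ifs with h1
  · split_ifs at h with h2
    exact hs ⟨k, h2⟩ ⟨k+1, h1⟩ rfl h
  · rfl

/-- The `b`-th right-column value. -/
def jval {m : ℕ} (s : Fin m → Bool) (b : ℕ) : ℕ :=
  if b = 0 then (if sN s 0 then 2 else 0)
  else if sN s (2*b - 1) then 3*b - 1
  else if sN s (2*b) then 3*b + 2
  else 3*b

lemma jval_le {m : ℕ} (s : Fin m → Bool) (b : ℕ) :
    jval s b ≤ 3*b + 2 ∧ 3*b ≤ jval s b + 1 := by
  unfold jval; split_ifs <;> omega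

lemma jval_mono {m : ℕ} {s : Fin m → Bool} (hs : Ok s) (b : ℕ) :
    jval s b < jval s (b+1) := by
  rcases Nat.eq_zero_or_pos b with rfl | hb
  · have k01 : ¬(sN s 0 = true ∧ sN s 1 = true) := by
      rintro ⟨x, y⟩; have h' := okN hs 0 x; rw [y] at h'; simp at h'
    cases h0 : sN s 0 <;> cases h1 : sN s 1 <;> cases h2 : sN s 2 <;>
      simp [jval, show 2*1-1 = 1 from rfl, show (2*1 : ℕ) = 2 from rfl, h0, h1, h2] <;>
      first | omega | (exact absurd ⟨h0, h1⟩ k01)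
  · have k01 : ¬(sN s (2*b-1) = true ∧ sN s (2*b) = true) := by
      rintro ⟨x, y⟩
      have h' := okN hs (2*b-1) x; rw [show 2*b-1+1 = 2*b by omega, y] at h'; simp at h'
    have k12 : ¬(sN s (2*b) = true ∧ sN s (2*b+1) = true) := by
      rintro ⟨x, y⟩
      have h' := okN hs (2*b) x; rw [y] at h'; simp at h'
    have e1 : 2*(b+1) - 1 = 2*b+1 := by omega
    have e2 : 2*(b+1) = 2*b+2 := by omega
    cases h0 : sN s (2*b-1) <;> cases h1 : sN s (2*b) <;> cases h2 : sN s (2*b+1) <;>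
        cases h3 : sN s (2*b+2) <;>
      simp [jval, e1, e2, h0, h1, h2, h3,
        if_neg (show ¬ b = 0 by omega), if_neg (show ¬ b + 1 = 0 by omega)] <;>
      first | omega | (exact absurd ⟨h1, h2⟩ k12) | (exact absurd ⟨h0, h1⟩ k01)

lemma jval_strictMono {m : ℕ} {s : Fin m → Bool} (hs : Ok s) : StrictMono (jval s) :=
  strictMono_nat_of_lt_succ (jval_mono hs)

/-- Decoding: the diagonal hit at step `k` detects `sN s k`. -/
lemma decode {m : ℕ} {s : Fin m → Bool} (hs : Ok s) (k : ℕ) :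
    (3 * (k/2) + 2 = jval s ((k+1)/2)) ↔ sN s k = true := by
  rcases Nat.even_or_odd k with ⟨a, rfl⟩ | ⟨a, rfl⟩
  · have e1 : (a + a)/2 = a := by omega
    have e2 : (a + a + 1)/2 = a := by omega
    have e3 : a + a = 2*a := by omega
    rw [e1, e2, e3]
    rcases Nat.eq_zero_or_pos a with rfl | ha
    · cases h0 : sN s 0 <;>
        simp [jval, show 2*0 = 0 from rfl, h0]
    · have k01 : ¬(sN s (2*a-1) = true ∧ sN s (2*a) = true) := by
        rintro ⟨x, y⟩
        have h' := okN hs (2*a-1) x; rw [show 2*a-1+1 = 2*a by omega, y] at h'; simp at h'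
      cases h0 : sN s (2*a-1) <;> cases h1 : sN s (2*a) <;>
        simp [jval, if_neg (show ¬ a = 0 by omega), h0, h1] <;>
        first | omega | (exact absurd ⟨h0, h1⟩ k01)
  · have e1 : (2*a + 1)/2 = a := by omega
    have e2 : (2*a + 1 + 1)/2 = a + 1 := by omega
    rw [e1, e2]
    have f1 : 2*(a+1) - 1 = 2*a+1 := by omega
    have f2 : 2*(a+1) = 2*a+2 := by omega
    cases h2 : sN s (2*a+1) <;> cases h3 : sN s (2*a+2) <;>
      simp [jval, f1, f2, h2, h3, if_neg (show ¬ a + 1 = 0 by omega)] <;> omega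

/-- Column values, mirrored if needed. -/
def cval (n : ℕ) {m : ℕ} (s : Fin m → Bool) (mir : Bool) (b : ℕ) : ℕ :=
  if mir then 3*n - 1 - jval s (n - n/2 - 1 - b) else jval s b

lemma cval_lt (n : ℕ) {m : ℕ} (s : Fin m → Bool) (mir : Bool) {b : ℕ}
    (hb : b < n - n/2) : cval n s mir b < 3*n := by
  unfold cval
  split_ifs
  · omega
  · have := jval_le s b; omega

/-- The strictly increasing vertex map `Fin n → Fin (2*(3*n))` encoding `s`. -/
def vmap (n : ℕ) {m : ℕ} (s : Fin m → Bool) (mir : Bool) (v : Fin n) : Fin (2*(3*n)) :=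
  if h : v.val < n/2 then ⟨3*v.val+2, by have := v.isLt; omega⟩
  else ⟨3*n + cval n s mir (v.val - n/2), by
    have h1 := v.isLt
    have h2 := cval_lt n s mir (b := v.val - n/2) (by omega)
    omega⟩

lemma vmap_lo (n : ℕ) {m : ℕ} (s : Fin m → Bool) (mir : Bool) (v : Fin n)
    (h : v.val < n/2) : (vmap n s mir v).val = 3*v.val+2 := by
  unfold vmap; rw [dif_pos h]

lemma vmap_hi (n : ℕ) {m : ℕ} (s : Fin m → Bool) (mir : Bool) (v : Fin n)
    (h : ¬ v.val < n/2) :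
    (vmap n s mir v).val = 3*n + cval n s mir (v.val - n/2) := by
  unfold vmap; rw [dif_neg h]

lemma vmap_strictMono (n : ℕ) {m : ℕ} {s : Fin m → Bool} (hs : Ok s) (mir : Bool) :
    StrictMono (vmap n s mir) := by
  intro u v huv
  have hu := u.isLt; have hv := v.isLt
  have hlt : u.val < v.val := huv
  rw [Fin.lt_iff_val_lt_val]
  by_cases h1 : u.val < n/2 <;> by_cases h2 : v.val < n/2
  · rw [vmap_lo n s mir u h1, vmap_lo n s mir v h2]; omega
  · rw [vmap_lo n s mir u h1, vmap_hi n s mir v h2]; omega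
  · omega
  · rw [vmap_hi n s mir u h1, vmap_hi n s mir v h2]
    have key : cval n s mir (u.val - n/2) < cval n s mir (v.val - n/2) := by
      unfold cval
      split_ifs with hm
      · have q1 : n - n/2 - 1 - (v.val - n/2) < n - n/2 - 1 - (u.val - n/2) := by omega
        have q2 := jval_strictMono hs q1
        have q3 := (jval_le s (n - n/2 - 1 - (u.val - n/2))).1
        omega
      · exact jval_strictMono hs (by omega)
    omega

def enc (sw : Bool) : Fin 2 → Fin 2 := fun x => if sw then swap2 x else x

lemma enc_inj (sw : Bool) : Function.Injective (enc sw) := by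
  intro x y hxy
  cases sw <;> fin_cases x <;> fin_cases y <;> simp_all [enc, swap2]

set_option maxHeartbeats 2000000 in
/-- The key color computation. -/
lemma color_edge (n : ℕ) (χ : Edge (2*(3*n)) → Fin 2) (sw mir : Bool)
    (hM : ∀ i j : Fin (3*n), matOf χ i j =
      (if sw then swap2 (idMat (3*n) i (if mir then j.rev else j))
       else idMat (3*n) i (if mir then j.rev else j)))
    {s : Fin (n-1) → Bool} (hs : Ok s) (hmono : StrictMono (vmap n s mir))
    (k : ℕ) (hk : k < n - 1) (bs : ℕ)
    (hbsd : bs = if mir then (n - n/2) - 1 - ((k+1)/2) else (k+1)/2)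
    (h1 : k/2 < n/2 + bs) (h2 : n/2 + bs < n) :
    χ (edgeMap (vmap n s mir) hmono (mkE (k/2) (n/2 + bs) h1 h2))
      = enc sw (if 3*(k/2) + 2 = jval s ((k+1)/2) then 1 else 0) := by
  set a := k/2 with ha_def
  set b := (k+1)/2 with hb_def
  have ha : a < n/2 := by omega
  have hq : b < n - n/2 := by omega
  have hbs : bs < n - n/2 := by rw [hbsd]; split_ifs <;> omega
  have hcv : cval n s mir bs < 3*n := cval_lt n s mir hbs
  have hjb : jval s b + 1 ≤ 3*n := by
    have := (jval_le s b).1; omega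
  -- step 1 : identify the edge with the one used in `matOf`
  have e1 : edgeMap (vmap n s mir) hmono (mkE a (n/2 + bs) h1 h2)
      = mkE (3*a+2) (3*n + cval n s mir bs) (by omega) (by omega) := by
    apply Subtype.ext
    have c1 : (vmap n s mir ⟨a, by omega⟩).val = 3*a+2 :=
      vmap_lo n s mir _ ha
    have c2 : (vmap n s mir ⟨n/2 + bs, by omega⟩).val
        = 3*n + cval n s mir bs := by
      rw [vmap_hi n s mir _ (by show ¬ (n/2 + bs < n/2); omega)]
      have e : n/2 + bs - n/2 = bs := by omega
      show 3*n + cval n s mir (n/2 + bs - n/2) = _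
      rw [e]
    exact Prod.ext (Fin.ext c1) (Fin.ext c2)
  rw [e1]
  -- step 2 : this is a matrix entry
  have e2 : χ (mkE (3*a+2) (3*n + cval n s mir bs) (by omega) (by omega))
      = matOf χ ⟨3*a+2, by omega⟩ ⟨cval n s mir bs, hcv⟩ := rfl
  rw [e2, hM]
  -- step 3 : the effective column is `jval s b`
  have e3 : (if mir then (⟨cval n s mir bs, hcv⟩ : Fin (3*n)).rev
             else (⟨cval n s mir bs, hcv⟩ : Fin (3*n))) = ⟨jval s b, by omega⟩ := by
    cases mir with
    | false =>
      rw [if_neg Bool.false_ne_true]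
      apply Fin.ext
      show cval n s false bs = jval s b
      rw [hbsd, if_neg Bool.false_ne_true]
      rfl
    | true =>
      have hb' : bs = (n - n/2) - 1 - b := by rw [hbsd, if_pos rfl]
      have hcval : cval n s true bs = 3*n - 1 - jval s b := by
        show (if (true : Bool) then 3*n - 1 - jval s (n - n/2 - 1 - bs) else jval s bs) = _
        rw [if_pos rfl]
        congr 2
        omega
      rw [if_pos rfl]
      apply Fin.ext
      rw [Fin.val_rev]
      show 3*n - (cval n s true bs + 1) = jval s b
      rw [hcval]
      omega
  rw [e3]
  -- step 4 : compute the identity matrix entry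
  have e4 : idMat (3*n) ⟨3*a+2, by omega⟩ ⟨jval s b, by omega⟩
      = (if 3*a + 2 = jval s b then 1 else 0) := by
    simp [idMat, Fin.ext_iff]
  rw [e4]
  cases sw <;> rfl

/-- Colorings on `n` vertices are just edge-colorings of `K_n`. -/
def fiberEquiv (n : ℕ) : {K : Coloring (Fin 2) // K.1 = n} ≃ (Edge n → Fin 2) where
  toFun K := K.2 ▸ K.1.2
  invFun c := ⟨⟨n, c⟩, rfl⟩
  left_inv := by rintro ⟨⟨i, b⟩, h⟩; dsimp only at h; subst h; rfl
  right_inv c := rfl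

lemma sN_val {m : ℕ} (s : Fin m → Bool) (k : Fin m) : sN s k.val = s k := by
  unfold sN
  rw [dif_pos k.isLt]


set_option maxHeartbeats 2000000 in
/-- If an ideal `X` of 2-colorings contains, for every `r ≥ 1`, an
`r`-wealthy coloring of type 3 (a coloring `(2r,χ)` with `M_K` similar to `I_r`), then
`|X_n| ≥ F_n` for all `n ≥ 1`, where `F_1 = 1, F_2 = 2, ...`, i.e. `F_n = Nat.fib (n+1)`. -/
theorem stmt_17 (X : Set (Coloring (Fin 2))) (hX : IsIdeal (· = ·) X)
    (h : ∀ r : ℕ, 1 ≤ r → ∃ χ : Edge (2 * r) → Fin 2,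
        SimilarToId (matOf χ) ∧ (⟨2 * r, χ⟩ : Coloring (Fin 2)) ∈ X) :
    ∀ n : ℕ, 1 ≤ n →
      Nat.fib (n + 1) ≤ Nat.card {K : Coloring (Fin 2) // K ∈ X ∧ K.1 = n} := by
  intro n hn
  have hfin : Finite {K : Coloring (Fin 2) // K ∈ X ∧ K.1 = n} := by
    apply Finite.of_injective
      (fun K : {K : Coloring (Fin 2) // K ∈ X ∧ K.1 = n} => fiberEquiv n ⟨K.1, K.2.2⟩)
    intro K L hKL
    have h2 := (fiberEquiv n).injective hKL
    have h3 : K.1 = L.1 := Subtype.mk_eq_mk.mp h2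
    exact Subtype.ext h3
  obtain ⟨χ, hsim, hmem⟩ := h (3*n) (by omega)
  obtain ⟨sw, mir, hM⟩ := hsim
  -- the family of colorings indexed by sparse strings
  set F : {s : Fin (n-1) → Bool // Ok s} → {K : Coloring (Fin 2) // K ∈ X ∧ K.1 = n} :=
    fun s => ⟨⟨n, fun e => χ (edgeMap (vmap n s.1 mir) (vmap_strictMono n s.2 mir) e)⟩,
      hX _ _ ⟨vmap n s.1 mir, vmap_strictMono n s.2 mir, fun e => rfl⟩ hmem, rfl⟩
    with hF
  have hFinj : Function.Injective F := by
    intro s t hst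
    have h1 : (⟨n, fun e => χ (edgeMap (vmap n s.1 mir) (vmap_strictMono n s.2 mir) e)⟩
        : Coloring (Fin 2))
        = ⟨n, fun e => χ (edgeMap (vmap n t.1 mir) (vmap_strictMono n t.2 mir) e)⟩ :=
      congrArg Subtype.val hst
    have h2 : (fun e => χ (edgeMap (vmap n s.1 mir) (vmap_strictMono n s.2 mir) e))
        = (fun e => χ (edgeMap (vmap n t.1 mir) (vmap_strictMono n t.2 mir) e)) := by
      exact eq_of_heq (Sigma.mk.inj_iff.mp h1).2
    apply Subtype.ext
    funext kk
    have hk : kk.val < n - 1 := kk.isLt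
    have hbs1 : kk.val/2 < n/2 + (if mir then (n - n/2) - 1 - ((kk.val+1)/2) else (kk.val+1)/2) := by
      split_ifs <;> omega
    have hbs2 : n/2 + (if mir then (n - n/2) - 1 - ((kk.val+1)/2) else (kk.val+1)/2) < n := by
      split_ifs <;> omega
    have h3 := congrFun h2 (mkE (kk.val/2)
      (n/2 + (if mir then (n - n/2) - 1 - ((kk.val+1)/2) else (kk.val+1)/2)) hbs1 hbs2)
    rw [color_edge n χ sw mir hM s.2 (vmap_strictMono n s.2 mir) kk.val hk _ rfl hbs1 hbs2,
        color_edge n χ sw mir hM t.2 (vmap_strictMono n t.2 mir) kk.val hk _ rfl hbs1 hbs2] at h3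
    have h4 := enc_inj sw h3
    have h5 : sN s.1 kk.val = sN t.1 kk.val := by
      have ds := decode s.2 kk.val
      have dt := decode t.2 kk.val
      by_cases hp : 3*(kk.val/2) + 2 = jval s.1 ((kk.val+1)/2) <;>
        by_cases hq : 3*(kk.val/2) + 2 = jval t.1 ((kk.val+1)/2)
      · rw [ds.mp hp, dt.mp hq]
      · rw [if_pos hp, if_neg hq] at h4; exact absurd h4 (by decide)
      · rw [if_neg hp, if_pos hq] at h4; exact absurd h4 (by decide)
      · cases hs1 : sN s.1 kk.val
        · cases ht1 : sN t.1 kk.val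
          · rfl
          · exact absurd (dt.mpr ht1) hq
        · exact absurd (ds.mpr hs1) hp
    rw [sN_val, sN_val] at h5
    exact h5
  calc Nat.fib (n+1) = Nat.fib ((n-1)+2) := by congr 1; omega
    _ = Nat.card {s : Fin (n-1) → Bool // Ok s} := (card_ok (n-1)).symm
    _ ≤ Nat.card {K : Coloring (Fin 2) // K ∈ X ∧ K.1 = n} :=
        Nat.card_le_card_of_injective F hFinj
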